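/- Let F be a field of characteristic 0 and let A be an algebra over F. Then for every n ≥ 1, dim_F P_n(F)/(P_n(F) ∩ Id(A,F)) ≤ rank of the finitely generated free abelian group P_n(ℤ)/(P_n(ℤ) ∩ Id(A,ℤ)). Moreover, if F = ℚ then equality holds: dim_ℚ P_n(ℚ)/(P_n(ℚ) ∩ Id(A,ℚ)) = rank P_n(ℤ)/(P_n(ℤ) ∩ Id(A,ℤ)). -/

import Mathlib

/-- Left-normed product `v 0 * v 1 * ⋯ * v n` of a nonempty family in a (possibly
non-unital) multiplicative structure. -/
def mprod {A : Type*} [Mul A] : {n : ℕ} → (Fin (n + 1) → A) → A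
  | 0, v => v 0
  | _ + 1, v => mprod (fun i => v i.castSucc) * v (Fin.last _)

/-- The group `P_{n+1}(ℤ)` of multilinear polynomials with integer coefficients in the
variables `x_1, …, x_{n+1}`: the free abelian group on the monomials
`x_{σ(1)} ⋯ x_{σ(n+1)}`, `σ ∈ S_{n+1}`. -/
abbrev PZ (n : ℕ) : Type := Equiv.Perm (Fin (n + 1)) →₀ ℤ

/-- Evaluation of a multilinear integer polynomial at the tuple `v` in a
(not necessarily unital) ring `A`, as a `ℤ`-linear map. -/
noncomputable def evalZ (A : Type*) [NonUnitalRing A] {n : ℕ} (v : Fin (n + 1) → A) :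
    PZ n →ₗ[ℤ] A :=
  Finsupp.lift A ℤ (Equiv.Perm (Fin (n + 1))) (fun σ => mprod (fun i => v (σ i)))

/-- `P_{n+1}(ℤ) ∩ Id(A, ℤ)`: the multilinear polynomial identities of `A`
with integer coefficients. -/
noncomputable def IdZ (A : Type*) [NonUnitalRing A] (n : ℕ) : AddSubgroup (PZ n) where
  carrier := {f | ∀ v : Fin (n + 1) → A, evalZ A v f = 0}
  zero_mem' := fun v => map_zero _
  add_mem' := fun hf hg v => by rw [map_add, hf v, hg v, add_zero]
  neg_mem' := fun hf v => by rw [map_neg, hf v, neg_zero]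

/-- The space `P_{n+1}(F)` of multilinear polynomials with coefficients in `F`. -/
abbrev PF (F : Type*) [Field F] (n : ℕ) := Equiv.Perm (Fin (n + 1)) →₀ F

/-- Evaluation of a multilinear polynomial over `F` in an `F`-algebra `B`
(possibly non-unital), as an `F`-linear map. -/
noncomputable def evalF (F : Type*) [Field F] {B : Type*} [NonUnitalRing B] [Module F B]
    {n : ℕ} (v : Fin (n + 1) → B) : PF F n →ₗ[F] B :=
  Finsupp.lift B F (Equiv.Perm (Fin (n + 1))) (fun σ => mprod (fun i => v (σ i)))

/-- `P_{n+1}(F) ∩ Id(B, F)`: the multilinear polynomial identities of `B`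
with coefficients in `F`. -/
noncomputable def IdF (F : Type*) [Field F] (B : Type*) [NonUnitalRing B] [Module F B]
    (n : ℕ) : Submodule F (PF F n) where
  carrier := {f | ∀ v : Fin (n + 1) → B, evalF F v f = 0}
  zero_mem' := fun v => map_zero _
  add_mem' := fun hf hg v => by rw [map_add, hf v, hg v, add_zero]
  smul_mem' := fun c f hf v => by rw [map_smul, hf v, smul_zero]

open Module Submodule

/- The evaluation vectors: `σ ↦ (v ↦ v_{σ(1)} ⋯ v_{σ(n+1)})`. -/
section

noncomputable def eV (A : Type*) [NonUnitalRing A] (n : ℕ) :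
    Equiv.Perm (Fin (n + 1)) → ((Fin (n + 1) → A) → A) :=
  fun σ v => mprod (fun i => v (σ i))

lemma quotF_eq (F : Type) [Field F] (A : Type) [NonUnitalRing A] [Module F A] (n : ℕ) :
    Module.finrank F (PF F n ⧸ IdF F A n)
      = Module.finrank F (span F (Set.range (eV A n))) := by
  let E : PF F n →ₗ[F] ((Fin (n + 1) → A) → A) := LinearMap.pi (fun v => evalF F v)
  have hE : E = Finsupp.linearCombination F (eV A n) := by
    apply Finsupp.lhom_ext
    intro σ c
    ext v
    simp [E, eV, evalF, Finsupp.linearCombination_single, Finsupp.sum_single_index]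
  have hker : IdF F A n = LinearMap.ker E := by
    ext f
    show (∀ v, evalF F v f = 0) ↔ E f = 0
    rw [funext_iff]
    exact Iff.rfl
  have hrange : LinearMap.range E = span F (Set.range (eV A n)) := by
    rw [hE, Finsupp.range_linearCombination]
  rw [hker]
  exact ((LinearMap.quotKerEquivRange E).trans (LinearEquiv.ofEq _ _ hrange)).finrank_eq

lemma quotZ_eq (A : Type) [NonUnitalRing A] (n : ℕ) :
    Module.finrank ℤ (PZ n ⧸ IdZ A n)
      = Module.finrank ℤ (span ℤ (Set.range (eV A n))) := by
  let E : PZ n →ₗ[ℤ] ((Fin (n + 1) → A) → A) := LinearMap.pi (fun v => evalZ A v)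
  have hE : E = Finsupp.linearCombination ℤ (eV A n) := by
    apply Finsupp.lhom_ext
    intro σ c
    ext v
    simp [E, eV, evalZ, Finsupp.linearCombination_single, Finsupp.sum_single_index]
  have hker : AddSubgroup.toIntSubmodule (IdZ A n) = LinearMap.ker E := by
    ext f
    show (∀ v, evalZ A v f = 0) ↔ E f = 0
    rw [funext_iff]
    exact Iff.rfl
  have hrange : LinearMap.range E = span ℤ (Set.range (eV A n)) := by
    rw [hE, Finsupp.range_linearCombination]
  have e0 : (PZ n ⧸ IdZ A n) ≃+ (PZ n ⧸ AddSubgroup.toIntSubmodule (IdZ A n)) :=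
    AddEquiv.refl _
  have h1 : Module.finrank ℤ (PZ n ⧸ IdZ A n)
      = Module.finrank ℤ (PZ n ⧸ AddSubgroup.toIntSubmodule (IdZ A n)) :=
    e0.toIntLinearEquiv.finrank_eq
  rw [h1, hker]
  exact ((LinearMap.quotKerEquivRange E).trans (LinearEquiv.ofEq _ _ hrange)).finrank_eq

/- In a `ℚ`-vector space, the `ℚ`-dimension of the span of a finite set equals the
`ℤ`-rank of its `ℤ`-span. -/
lemma factB {V : Type*} [AddCommGroup V] [Module ℚ V] (S : Set V) (hS : S.Finite) :
    Module.finrank ℚ (span ℚ S) = Module.finrank ℤ (span ℤ S) := by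
  haveI : Module.Finite ℤ (span ℤ S) := Module.Finite.span_of_finite ℤ hS
  haveI : Module.IsTorsionFree ℤ V := Module.IsTorsionFree.of_smul_eq_zero fun r m h => by
    rw [← Int.cast_smul_eq_zsmul ℚ, smul_eq_zero] at h; exact_mod_cast h
  haveI : Module.Free ℤ (span ℤ S) := Module.free_of_finite_type_torsion_free'
  let b := Module.Free.chooseBasis ℤ (span ℤ S)
  let ι := Module.Free.ChooseBasisIndex ℤ (span ℤ S)
  let v : ι → V := fun i => ((b i : span ℤ S) : V)
  have hli : LinearIndependent ℤ v :=
    b.linearIndependent.map' (span ℤ S).subtype (Submodule.ker_subtype _)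
  have hliQ : LinearIndependent ℚ v := (LinearIndependent.iff_fractionRing ℤ ℚ).mp hli
  have hrv : Set.range v = (span ℤ S).subtype '' Set.range b := by
    rw [← Set.range_comp]; rfl
  have hsz : span ℤ (Set.range v) = span ℤ S := by
    rw [hrv, ← Submodule.map_span, b.span_eq, Submodule.map_top, Submodule.range_subtype]
  have hsq : span ℚ (Set.range v) = span ℚ S := by
    calc span ℚ (Set.range v) = span ℚ (span ℤ (Set.range v) : Set V) :=
          (Submodule.span_span_of_tower ℤ ℚ _).symm
      _ = span ℚ (span ℤ S : Set V) := by rw [hsz]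
      _ = span ℚ S := Submodule.span_span_of_tower ℤ ℚ _
  rw [← hsq, finrank_span_eq_card hliQ]
  exact (Module.finrank_eq_card_chooseBasisIndex ℤ (span ℤ S)).symm

/- Over a field `F` that is a `ℚ`-algebra, the `F`-dimension of the `F`-span of a set is at
most the `ℚ`-dimension of its `ℚ`-span. -/
lemma factA {F : Type} [Field F] {V : Type*} [AddCommGroup V] [Module F V] [Module ℚ V]
    [IsScalarTower ℚ F V] (S : Set V) (hS : S.Finite) :
    Module.finrank F (span F S) ≤ Module.finrank ℚ (span ℚ S) := by
  haveI : Module.Finite ℚ (span ℚ S) := Module.Finite.span_of_finite ℚ hS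
  let b := Module.Free.chooseBasis ℚ (span ℚ S)
  let ι := Module.Free.ChooseBasisIndex ℚ (span ℚ S)
  let v : ι → V := fun i => ((b i : span ℚ S) : V)
  have hrv : Set.range v = (span ℚ S).subtype '' Set.range b := by
    rw [← Set.range_comp]; rfl
  have hsq : span ℚ (Set.range v) = span ℚ S := by
    rw [hrv, ← Submodule.map_span, b.span_eq, Submodule.map_top, Submodule.range_subtype]
  have hSle : span F S ≤ span F (Set.range v) := by
    rw [Submodule.span_le]
    intro x hx
    have hx1 : x ∈ span ℚ (Set.range v) := hsq.symm ▸ Submodule.subset_span hx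
    exact Submodule.span_le_restrictScalars ℚ F _ hx1
  haveI : Module.Finite F (span F (Set.range v)) :=
    Module.Finite.span_of_finite F (Set.finite_range v)
  calc Module.finrank F (span F S) ≤ Module.finrank F (span F (Set.range v)) :=
        Submodule.finrank_mono hSle
    _ ≤ Fintype.card ι := finrank_range_le_card v
    _ = Module.finrank ℚ (span ℚ S) :=
        (Module.finrank_eq_card_chooseBasisIndex ℚ (span ℚ S)).symm

end

theorem stmt_1 (A : Type) [Ring A] (n : ℕ) :
    (∀ (F : Type) [Field F] [Algebra F A], CharP F 0 →
      Module.finrank F (PF F n ⧸ IdF F A n) ≤ Module.finrank ℤ (PZ n ⧸ IdZ A n)) ∧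
    (∀ [Algebra ℚ A],
      Module.finrank ℚ (PF ℚ n ⧸ IdF ℚ A n) = Module.finrank ℤ (PZ n ⧸ IdZ A n)) := by
  constructor
  · intro F _ _ hc
    haveI : CharP F 0 := hc
    haveI : CharZero F := CharP.charP_to_charZero F
    letI : Algebra ℚ A := RingHom.toAlgebra' ((algebraMap F A).comp (algebraMap ℚ F))
      (fun q a => by simpa using Algebra.commutes (algebraMap ℚ F q) a)
    haveI : IsScalarTower ℚ F A := IsScalarTower.of_algebraMap_eq' rfl
    calc Module.finrank F (PF F n ⧸ IdF F A n)
        = Module.finrank F (span F (Set.range (eV A n))) := quotF_eq F A n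
      _ ≤ Module.finrank ℚ (span ℚ (Set.range (eV A n))) :=
          factA _ (Set.finite_range _)
      _ = Module.finrank ℤ (span ℤ (Set.range (eV A n))) :=
          factB _ (Set.finite_range _)
      _ = Module.finrank ℤ (PZ n ⧸ IdZ A n) := (quotZ_eq A n).symm
  · intro _
    calc Module.finrank ℚ (PF ℚ n ⧸ IdF ℚ A n)
        = Module.finrank ℚ (span ℚ (Set.range (eV A n))) := quotF_eq ℚ A n
      _ = Module.finrank ℤ (span ℤ (Set.range (eV A n))) :=
          factB _ (Set.finite_range _)
      _ = Module.finrank ℤ (PZ n ⧸ IdZ A n) := (quotZ_eq A n).symm
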